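/- Suppose x^k ∈ ℝ^{n×p} satisfies x^{k+1} = Wx^k − α_k g^k where ‖W^j − (1/n)11^T‖ ≤ Cζ^j with 0 ≤ ζ < 1, ‖g^k‖ ≤ B for all k, and α_k = 1/(L(k+1)^ε) with ε ∈ (0,1], L > 0. Then with x̄^k = (1/n)11^T x^k, ‖x^k − x̄^k‖ ≤ C(‖x^0‖ζ^k + B Σ_{j=0}^{k-1} α_j ζ^{k-1-j}), and consequently ‖x^k − x̄^k‖ → 0 at rate O(1/(k+1)^ε), i.e., limsup_k (k+1)^ε ‖x^k − x̄^k‖ < ∞. -/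

import Mathlib

/-- The Frobenius norm of a real matrix. -/
noncomputable def frob {m p : Type*} [Fintype m] [Fintype p] (A : Matrix m p ℝ) : ℝ :=
  Real.sqrt (∑ i, ∑ j, (A i j) ^ 2)

section FrobLemmas

attribute [local instance] Matrix.frobeniusSeminormedAddCommGroup
  Matrix.frobeniusNormSMulClass

variable {m p q : Type*} [Fintype m] [Fintype p] [Fintype q]

lemma frob_eq_norm (A : Matrix m p ℝ) : frob A = ‖A‖ := by
  rw [frob, Matrix.frobenius_norm_def, Real.sqrt_eq_rpow]
  congr 1
  refine Finset.sum_congr rfl fun i _ => Finset.sum_congr rfl fun j _ => ?_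
  rw [Real.norm_eq_abs, Real.rpow_two, sq_abs]

lemma frob_nonneg (A : Matrix m p ℝ) : 0 ≤ frob A := Real.sqrt_nonneg _

lemma frob_zero_imp {A : Matrix m p ℝ} (h : frob A = 0) : A = 0 := by
  have hs : ∑ i, ∑ j, (A i j) ^ 2 = 0 :=
    (Real.sqrt_eq_zero (by positivity)).mp h
  ext i j
  have h1 := (Finset.sum_eq_zero_iff_of_nonneg
    (fun i _ => Finset.sum_nonneg fun j _ => sq_nonneg (A i j))).mp hs i (Finset.mem_univ i)
  have h2 := (Finset.sum_eq_zero_iff_of_nonneg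
    (fun j _ => sq_nonneg (A i j))).mp h1 j (Finset.mem_univ j)
  simpa using pow_eq_zero_iff two_ne_zero |>.mp h2

lemma frob_mul_le (A : Matrix m p ℝ) (B : Matrix p q ℝ) :
    frob (A * B) ≤ frob A * frob B := by
  rw [frob_eq_norm, frob_eq_norm, frob_eq_norm]
  exact Matrix.frobenius_norm_mul A B

lemma frob_sub_le (A B : Matrix m p ℝ) : frob (A - B) ≤ frob A + frob B := by
  rw [frob_eq_norm, frob_eq_norm, frob_eq_norm]; exact norm_sub_le A B

lemma frob_neg (A : Matrix m p ℝ) : frob (-A) = frob A := by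
  rw [frob_eq_norm, frob_eq_norm]; exact norm_neg A

lemma frob_smul (c : ℝ) (A : Matrix m p ℝ) : frob (c • A) = |c| * frob A := by
  rw [frob_eq_norm, frob_eq_norm, ← Real.norm_eq_abs]; exact norm_smul c A

lemma frob_sum_le {ι : Type*} (s : Finset ι) (f : ι → Matrix m p ℝ) :
    frob (∑ i ∈ s, f i) ≤ ∑ i ∈ s, frob (f i) := by
  rw [frob_eq_norm]
  refine le_trans (norm_sum_le s f) ?_
  exact le_of_eq (Finset.sum_congr rfl fun i _ => (frob_eq_norm (f i)).symm)

end FrobLemmas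

theorem stmt10 {n p : ℕ} (hn : 0 < n) (W : Matrix (Fin n) (Fin n) ℝ)
    (C ζ B L ε : ℝ) (hC : 0 < C) (hζ0 : 0 ≤ ζ) (hζ1 : ζ < 1) (hB : 0 ≤ B)
    (hL : 0 < L) (hε : 0 < ε) (hε1 : ε ≤ 1)
    (α : ℕ → ℝ) (hα : ∀ k : ℕ, α k = 1 / (L * ((k : ℝ) + 1) ^ ε))
    (hWk : ∀ j : ℕ,
      frob (W ^ j - Matrix.of fun _ _ : Fin n => (1 : ℝ) / n) ≤ C * ζ ^ j)
    (x g : ℕ → Matrix (Fin n) (Fin p) ℝ)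
    (hg : ∀ k, frob (g k) ≤ B)
    (hrec : ∀ k, x (k + 1) = W * x k - α k • g k) :
    (∀ k : ℕ,
      frob (x k - (Matrix.of fun _ _ : Fin n => (1 : ℝ) / n) * x k)
        ≤ C * (frob (x 0) * ζ ^ k + B * ∑ j ∈ Finset.range k, α j * ζ ^ (k - 1 - j))) ∧
    (∃ M : ℝ, ∀ k : ℕ,
      ((k : ℝ) + 1) ^ ε *
        frob (x k - (Matrix.of fun _ _ : Fin n => (1 : ℝ) / n) * x k) ≤ M) := by
  set J : Matrix (Fin n) (Fin n) ℝ := Matrix.of fun _ _ : Fin n => (1 : ℝ) / n with hJdef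
  -- positivity of step sizes
  have hαpos : ∀ j : ℕ, 0 < α j := by
    intro j
    rw [hα j]
    have : (0:ℝ) < ((j:ℝ) + 1) ^ ε := Real.rpow_pos_of_pos (by positivity) ε
    positivity
  -- a helper to deduce a matrix identity from norm bounds tending to zero
  have vanish : ∀ (A : Matrix (Fin n) (Fin n) ℝ) (K : ℝ),
      (∀ j : ℕ, frob A ≤ K * ζ ^ j) → A = 0 := by
    intro A K hb
    have htend : Filter.Tendsto (fun j : ℕ => K * ζ ^ j) Filter.atTop (nhds 0) := by
      simpa using (tendsto_pow_atTop_nhds_zero_of_lt_one hζ0 hζ1).const_mul K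
    have h0 : frob A ≤ 0 := ge_of_tendsto' htend hb
    exact frob_zero_imp (le_antisymm h0 (frob_nonneg A))
  -- J * W = J
  have hJW : J * W = J := by
    rw [← sub_eq_zero]
    refine vanish _ (C * ζ + C * frob W) (fun j => ?_)
    have hident : J * W - J = (W ^ (j+1) - J) - (W ^ j - J) * W := by
      rw [Matrix.sub_mul, ← pow_succ]; abel
    rw [hident]
    calc frob ((W ^ (j+1) - J) - (W ^ j - J) * W)
        ≤ frob (W ^ (j+1) - J) + frob ((W ^ j - J) * W) := frob_sub_le _ _
      _ ≤ C * ζ ^ (j+1) + frob (W ^ j - J) * frob W :=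
          add_le_add (hWk (j+1)) (frob_mul_le _ _)
      _ ≤ C * ζ ^ (j+1) + C * ζ ^ j * frob W :=
          add_le_add le_rfl (mul_le_mul_of_nonneg_right (hWk j) (frob_nonneg W))
      _ = (C * ζ + C * frob W) * ζ ^ j := by ring
  -- W * J = J
  have hWJ : W * J = J := by
    rw [← sub_eq_zero]
    refine vanish _ (C * ζ + frob W * C) (fun j => ?_)
    have hident : W * J - J = (W ^ (j+1) - J) - W * (W ^ j - J) := by
      rw [Matrix.mul_sub, ← pow_succ']; abel
    rw [hident]
    calc frob ((W ^ (j+1) - J) - W * (W ^ j - J))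
        ≤ frob (W ^ (j+1) - J) + frob (W * (W ^ j - J)) := frob_sub_le _ _
      _ ≤ C * ζ ^ (j+1) + frob W * frob (W ^ j - J) :=
          add_le_add (hWk (j+1)) (frob_mul_le _ _)
      _ ≤ C * ζ ^ (j+1) + frob W * (C * ζ ^ j) := by
          refine add_le_add le_rfl (mul_le_mul_of_nonneg_left (hWk j) (frob_nonneg W))
      _ = (C * ζ + frob W * C) * ζ ^ j := by ring
  -- J * W ^ m = J
  have hJWk : ∀ m : ℕ, J * W ^ m = J := by
    intro m
    induction m with
    | zero => simp
    | succ m ih => rw [pow_succ, ← Matrix.mul_assoc, ih, hJW]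
  -- J * J = J
  have hJJ : J * J = J := by
    rw [← sub_eq_zero]
    refine vanish _ (frob J * C) (fun j => ?_)
    have hident : J * J - J = -(J * (W ^ j - J)) := by
      rw [Matrix.mul_sub, hJWk j]; abel
    rw [hident, frob_neg]
    calc frob (J * (W ^ j - J)) ≤ frob J * frob (W ^ j - J) := frob_mul_le _ _
      _ ≤ frob J * (C * ζ ^ j) :=
          mul_le_mul_of_nonneg_left (hWk j) (frob_nonneg J)
      _ = frob J * C * ζ ^ j := by ring
  -- key algebraic identity
  have hWJm : ∀ m : ℕ, (W - J) * (W ^ m - J) = W ^ (m+1) - J := by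
    intro m
    rw [Matrix.sub_mul, Matrix.mul_sub, Matrix.mul_sub, hWJ, hJWk m, hJJ, ← pow_succ']
    abel
  -- closed form for the deviation from consensus
  have hclosed : ∀ k : ℕ, x k - J * x k =
      (W ^ k - J) * x 0 - ∑ j ∈ Finset.range k, α j • ((W ^ (k - 1 - j) - J) * g j) := by
    intro k
    induction k with
    | zero => simp [Matrix.sub_mul]
    | succ k ih =>
      have hstep : x (k+1) - J * x (k+1)
          = (W - J) * (x k - J * x k) - α k • ((1 - J) * g k) := by
        rw [hrec k]
        simp only [Matrix.mul_sub, Matrix.sub_mul, Matrix.mul_smul, Matrix.one_mul,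
          smul_sub, ← Matrix.mul_assoc, hJW, hWJ, hJJ]
        abel
      have hsum : (W - J) * (∑ j ∈ Finset.range k, α j • ((W ^ (k - 1 - j) - J) * g j))
          = ∑ j ∈ Finset.range k, α j • ((W ^ (k - j) - J) * g j) := by
        rw [Matrix.mul_sum]
        refine Finset.sum_congr rfl fun j hj => ?_
        have hjk : j < k := Finset.mem_range.mp hj
        have h' : k - 1 - j + 1 = k - j := by omega
        rw [Matrix.mul_smul, ← Matrix.mul_assoc, hWJm, h']
      rw [hstep, ih, Matrix.mul_sub, hsum, ← Matrix.mul_assoc, hWJm k]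
      simp only [Nat.add_sub_cancel]
      rw [Finset.sum_range_succ, Nat.sub_self, pow_zero]
      abel
  -- Part 1
  have hpart1 : ∀ k : ℕ,
      frob (x k - J * x k)
        ≤ C * (frob (x 0) * ζ ^ k + B * ∑ j ∈ Finset.range k, α j * ζ ^ (k - 1 - j)) := by
    intro k
    rw [hclosed k]
    have h1 : frob ((W ^ k - J) * x 0) ≤ C * ζ ^ k * frob (x 0) := by
      calc frob ((W ^ k - J) * x 0) ≤ frob (W ^ k - J) * frob (x 0) := frob_mul_le _ _
        _ ≤ C * ζ ^ k * frob (x 0) :=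
            mul_le_mul_of_nonneg_right (hWk k) (frob_nonneg _)
    have h2 : frob (∑ j ∈ Finset.range k, α j • ((W ^ (k - 1 - j) - J) * g j))
        ≤ ∑ j ∈ Finset.range k, α j * (C * ζ ^ (k - 1 - j) * B) := by
      refine le_trans (frob_sum_le _ _) (Finset.sum_le_sum fun j _ => ?_)
      rw [frob_smul, abs_of_pos (hαpos j)]
      refine mul_le_mul_of_nonneg_left ?_ (hαpos j).le
      calc frob ((W ^ (k - 1 - j) - J) * g j)
          ≤ frob (W ^ (k - 1 - j) - J) * frob (g j) := frob_mul_le _ _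
        _ ≤ (C * ζ ^ (k - 1 - j)) * B := by
            refine mul_le_mul (hWk _) (hg j) (frob_nonneg _) ?_
            positivity
    have h3 : ∑ j ∈ Finset.range k, α j * (C * ζ ^ (k - 1 - j) * B)
        = C * (B * ∑ j ∈ Finset.range k, α j * ζ ^ (k - 1 - j)) := by
      rw [Finset.mul_sum, Finset.mul_sum]
      exact Finset.sum_congr rfl fun j _ => by ring
    calc frob ((W ^ k - J) * x 0 - ∑ j ∈ Finset.range k, α j • ((W ^ (k - 1 - j) - J) * g j))
        ≤ frob ((W ^ k - J) * x 0)
          + frob (∑ j ∈ Finset.range k, α j • ((W ^ (k - 1 - j) - J) * g j)) := frob_sub_le _ _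
      _ ≤ C * ζ ^ k * frob (x 0) + C * (B * ∑ j ∈ Finset.range k, α j * ζ ^ (k - 1 - j)) := by
          rw [← h3]; exact add_le_add h1 h2
      _ = C * (frob (x 0) * ζ ^ k + B * ∑ j ∈ Finset.range k, α j * ζ ^ (k - 1 - j)) := by ring
  refine ⟨hpart1, ?_⟩
  -- Part 2
  have hsummable : Summable (fun m : ℕ => ((m:ℝ) + 1) * ζ ^ m) := by
    have h1 : Summable (fun m : ℕ => (m:ℝ) ^ 1 * ζ ^ m) :=
      summable_pow_mul_geometric_of_norm_lt_one 1 (by rwa [Real.norm_eq_abs, abs_of_nonneg hζ0])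
    have h2 : Summable (fun m : ℕ => ζ ^ m) := summable_geometric_of_lt_one hζ0 hζ1
    have := h1.add h2
    refine this.congr fun m => by ring
  set D : ℝ := ∑' m : ℕ, ((m:ℝ) + 1) * ζ ^ m with hDdef
  have hDterm : ∀ m : ℕ, ((m:ℝ) + 1) * ζ ^ m ≤ D := by
    intro m
    exact Summable.le_tsum hsummable m (fun j _ => by positivity)
  have hD0 : 0 ≤ D := tsum_nonneg fun m => by positivity
  have hrpow_le : ∀ k : ℕ, ((k:ℝ) + 1) ^ ε ≤ (k:ℝ) + 1 := by
    intro k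
    calc ((k:ℝ) + 1) ^ ε ≤ ((k:ℝ) + 1) ^ (1:ℝ) :=
          Real.rpow_le_rpow_of_exponent_le (le_add_of_nonneg_left (Nat.cast_nonneg k)) hε1
      _ = (k:ℝ) + 1 := Real.rpow_one _
  have key1 : ∀ k : ℕ, ((k:ℝ) + 1) ^ ε * ζ ^ k ≤ D := by
    intro k
    calc ((k:ℝ) + 1) ^ ε * ζ ^ k ≤ ((k:ℝ) + 1) * ζ ^ k :=
          mul_le_mul_of_nonneg_right (hrpow_le k) (by positivity)
      _ ≤ D := hDterm k
  have key2 : ∀ k : ℕ,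
      ((k:ℝ) + 1) ^ ε * ∑ j ∈ Finset.range k, α j * ζ ^ (k - 1 - j) ≤ (2 / L) * D := by
    intro k
    rw [Finset.mul_sum]
    have step : ∀ j ∈ Finset.range k,
        ((k:ℝ) + 1) ^ ε * (α j * ζ ^ (k - 1 - j))
          ≤ (2 / L) * (((k - 1 - j : ℕ):ℝ) + 1) * ζ ^ (k - 1 - j) := by
      intro j hj
      have hjk : j < k := Finset.mem_range.mp hj
      have hjr : (j:ℝ) + 1 ≤ (k:ℝ) := by exact_mod_cast Nat.succ_le_of_lt hjk
      have hj0 : (0:ℝ) ≤ (j:ℝ) := Nat.cast_nonneg j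
      have hcast : ((k - 1 - j : ℕ):ℝ) + 1 = (k:ℝ) - (j:ℝ) := by
        have h' : k - 1 - j + 1 = k - j := by omega
        rw [← Nat.cast_add_one, h', Nat.cast_sub hjk.le]
      have hP : (0:ℝ) < ((j:ℝ) + 1) ^ ε := Real.rpow_pos_of_pos (by positivity) ε
      have hZ : (0:ℝ) ≤ ζ ^ (k - 1 - j) := by positivity
      have hmain : ((k:ℝ) + 1) ^ ε ≤ 2 * ((k:ℝ) - (j:ℝ)) * ((j:ℝ) + 1) ^ ε := by
        have hbase : (1:ℝ) ≤ ((k:ℝ) + 1) / ((j:ℝ) + 1) := by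
          rw [le_div_iff₀ (by positivity)]; linarith
        have e1 : ((k:ℝ) + 1) ^ ε = (((k:ℝ) + 1) / ((j:ℝ) + 1)) ^ ε * ((j:ℝ) + 1) ^ ε := by
          rw [← Real.mul_rpow (by positivity) (by positivity)]
          congr 1
          field_simp
        have e2 : (((k:ℝ) + 1) / ((j:ℝ) + 1)) ^ ε ≤ ((k:ℝ) + 1) / ((j:ℝ) + 1) := by
          calc (((k:ℝ) + 1) / ((j:ℝ) + 1)) ^ ε ≤ (((k:ℝ) + 1) / ((j:ℝ) + 1)) ^ (1:ℝ) :=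
                Real.rpow_le_rpow_of_exponent_le hbase hε1
            _ = ((k:ℝ) + 1) / ((j:ℝ) + 1) := Real.rpow_one _
        have e3 : ((k:ℝ) + 1) / ((j:ℝ) + 1) ≤ 2 * ((k:ℝ) - (j:ℝ)) := by
          rw [div_le_iff₀ (by positivity)]
          nlinarith [hj0, hjr]
        calc ((k:ℝ) + 1) ^ ε = (((k:ℝ) + 1) / ((j:ℝ) + 1)) ^ ε * ((j:ℝ) + 1) ^ ε := e1
          _ ≤ (2 * ((k:ℝ) - (j:ℝ))) * ((j:ℝ) + 1) ^ ε :=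
              mul_le_mul_of_nonneg_right (e2.trans e3) hP.le
      rw [hcast, hα j]
      have hLP : (0:ℝ) < L * ((j:ℝ) + 1) ^ ε := mul_pos hL hP
      calc ((k:ℝ) + 1) ^ ε * (1 / (L * ((j:ℝ) + 1) ^ ε) * ζ ^ (k - 1 - j))
          = ((k:ℝ) + 1) ^ ε * ζ ^ (k - 1 - j) * (1 / (L * ((j:ℝ) + 1) ^ ε)) := by ring
        _ ≤ (2 * ((k:ℝ) - (j:ℝ)) * ((j:ℝ) + 1) ^ ε) * ζ ^ (k - 1 - j)
              * (1 / (L * ((j:ℝ) + 1) ^ ε)) := by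
            refine mul_le_mul_of_nonneg_right ?_ (by positivity)
            exact mul_le_mul_of_nonneg_right hmain hZ
        _ = 2 / L * ((k:ℝ) - (j:ℝ)) * ζ ^ (k - 1 - j) := by
            field_simp
    calc ∑ j ∈ Finset.range k, ((k:ℝ) + 1) ^ ε * (α j * ζ ^ (k - 1 - j))
        ≤ ∑ j ∈ Finset.range k, (2 / L) * (((k - 1 - j : ℕ):ℝ) + 1) * ζ ^ (k - 1 - j) :=
          Finset.sum_le_sum step
      _ = ∑ m ∈ Finset.range k, (2 / L) * ((m:ℝ) + 1) * ζ ^ m :=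
          Finset.sum_range_reflect (fun m => (2 / L) * ((m:ℝ) + 1) * ζ ^ m) k
      _ = (2 / L) * ∑ m ∈ Finset.range k, ((m:ℝ) + 1) * ζ ^ m := by
          rw [Finset.mul_sum]
          exact Finset.sum_congr rfl fun m _ => by ring
      _ ≤ (2 / L) * D := by
          refine mul_le_mul_of_nonneg_left ?_ (by positivity)
          exact Summable.sum_le_tsum _ (fun m _ => by positivity) hsummable
  refine ⟨C * (frob (x 0) * D + B * ((2 / L) * D)), fun k => ?_⟩
  have hrpnn : (0:ℝ) ≤ ((k:ℝ) + 1) ^ ε := (Real.rpow_pos_of_pos (by positivity) ε).le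
  calc ((k:ℝ) + 1) ^ ε * frob (x k - J * x k)
      ≤ ((k:ℝ) + 1) ^ ε *
          (C * (frob (x 0) * ζ ^ k + B * ∑ j ∈ Finset.range k, α j * ζ ^ (k - 1 - j))) :=
        mul_le_mul_of_nonneg_left (hpart1 k) hrpnn
    _ = C * (frob (x 0) * (((k:ℝ) + 1) ^ ε * ζ ^ k)
          + B * (((k:ℝ) + 1) ^ ε * ∑ j ∈ Finset.range k, α j * ζ ^ (k - 1 - j))) := by ring
    _ ≤ C * (frob (x 0) * D + B * ((2 / L) * D)) := by
        refine mul_le_mul_of_nonneg_left ?_ hC.le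
        exact add_le_add (mul_le_mul_of_nonneg_left (key1 k) (frob_nonneg _))
          (mul_le_mul_of_nonneg_left (key2 k) hB)
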